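/- For f(t) = t/(1-t) on [0,1) and m ∈ (0,1), the integral 2∫_m^1 (1-t)²f(t)/√((1-t)²f(t)² - (1-m)²f(m)²) dt equals m² log(m/(√(1-m²)+1)) + √(1-m²). -/

import Mathlib

open Set Filter MeasureTheory

/-- For the prototype `f(t) = t/(1-t)` and `m ∈ (0,1)`,
`2∫_m^1 (1-t)²f(t)/√((1-t)²f(t)² - (1-m)²f(m)²) dt
  = m² log(m/(√(1-m²)+1)) + √(1-m²)`. -/
theorem stmt16 (m : ℝ) (hm : m ∈ Ioo (0:ℝ) 1)
    (f : ℝ → ℝ) (hf : ∀ t, f t = t / (1 - t)) :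
    2 * ∫ t in Ioo m 1,
        (1 - t) ^ 2 * f t /
          Real.sqrt ((1 - t) ^ 2 * (f t) ^ 2 - (1 - m) ^ 2 * (f m) ^ 2) =
    m ^ 2 * Real.log (m / (Real.sqrt (1 - m ^ 2) + 1)) + Real.sqrt (1 - m ^ 2) := by
  obtain ⟨hm0, hm1⟩ := hm
  have hm2 : (1:ℝ) - m ≠ 0 := by linarith
  -- simplify the integrand on `Ioo m 1`
  have key : EqOn (fun t => (1 - t) ^ 2 * f t /
          Real.sqrt ((1 - t) ^ 2 * (f t) ^ 2 - (1 - m) ^ 2 * (f m) ^ 2))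
      (fun t => t * (1 - t) / Real.sqrt (t ^ 2 - m ^ 2)) (Ioo m 1) := by
    intro t ht
    have h1 : (1:ℝ) - t ≠ 0 := by have := ht.2; intro h; nlinarith
    simp only [hf]
    have e1 : (1 - t) ^ 2 * (t / (1 - t)) = t * (1 - t) := by field_simp
    have e2 : (1 - t) ^ 2 * (t / (1 - t)) ^ 2 - (1 - m) ^ 2 * (m / (1 - m)) ^ 2
        = t ^ 2 - m ^ 2 := by field_simp
    simp only [e1, e2]
  rw [setIntegral_congr_fun measurableSet_Ioo key]
  set F : ℝ → ℝ := fun t =>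
    (2 - t) * Real.sqrt (t ^ 2 - m ^ 2)
      - m ^ 2 * Real.log (t + Real.sqrt (t ^ 2 - m ^ 2)) with hF
  -- continuity of F on [m,1]
  have hcs : Continuous fun t : ℝ => Real.sqrt (t ^ 2 - m ^ 2) := by
    exact Real.continuous_sqrt.comp (by continuity)
  have hcont : ContinuousOn F (Icc m 1) := by
    apply ContinuousOn.sub
    · exact ((continuous_const.sub continuous_id).mul hcs).continuousOn
    · apply ContinuousOn.mul continuousOn_const
      apply ContinuousOn.log (Continuous.continuousOn (by continuity))
      intro t ht
      have h1 : 0 ≤ Real.sqrt (t ^ 2 - m ^ 2) := Real.sqrt_nonneg _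
      have h2 : m ≤ t := ht.1
      intro h
      nlinarith
  -- derivative of F on (m,1)
  have hderiv : ∀ t ∈ Ioo m 1,
      HasDerivAt F (2 * (t * (1 - t) / Real.sqrt (t ^ 2 - m ^ 2))) t := by
    intro t ht
    have htm : 0 < t ^ 2 - m ^ 2 := by nlinarith [ht.1, ht.2]
    set A : ℝ := Real.sqrt (t ^ 2 - m ^ 2) with hA
    have hA0 : 0 < A := Real.sqrt_pos.2 htm
    have hA2 : A ^ 2 = t ^ 2 - m ^ 2 := Real.sq_sqrt htm.le
    have htA : 0 < t + A := add_pos (lt_trans hm0 ht.1) hA0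
    have hu : HasDerivAt (fun t : ℝ => t ^ 2 - m ^ 2) (2 * t) t := by
      simpa using (hasDerivAt_pow 2 t).sub_const (m ^ 2)
    have hsqrt : HasDerivAt (fun t : ℝ => Real.sqrt (t ^ 2 - m ^ 2)) (t / A) t := by
      have := (Real.hasDerivAt_sqrt htm.ne').comp t hu
      have e : t / A = 1 / (2 * A) * (2 * t) := by field_simp
      rw [e]
      exact this
    have hlog : HasDerivAt (fun t : ℝ => Real.log (t + Real.sqrt (t ^ 2 - m ^ 2)))
        ((1 + t / A) / (t + A)) t := by
      have hadd : HasDerivAt (fun t : ℝ => t + Real.sqrt (t ^ 2 - m ^ 2)) (1 + t / A) t :=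
        (hasDerivAt_id t).add hsqrt
      exact hadd.log htA.ne'
    have hmain : HasDerivAt F
        ((-1) * A + (2 - t) * (t / A) - m ^ 2 * ((1 + t / A) / (t + A))) t := by
      exact (((hasDerivAt_id t).const_sub 2).mul hsqrt).sub ((hlog.const_mul (m ^ 2)))
    convert hmain using 1
    have h1 : (1 + t / A) / (t + A) = 1 / A := by
      rw [div_eq_div_iff htA.ne' hA0.ne']
      field_simp
      ring
    rw [h1]
    field_simp
    nlinarith [hA2]
  -- integrability via comparison with (t-m)^(-1/2)
  have hint : IntervalIntegrable
      (fun t => 2 * (t * (1 - t) / Real.sqrt (t ^ 2 - m ^ 2))) volume m 1 := by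
    have hrp : IntervalIntegrable (fun x : ℝ => x ^ (-(1/2) : ℝ)) volume 0 (1 - m) :=
      intervalIntegral.intervalIntegrable_rpow' (by norm_num)
    have hshift : IntervalIntegrable
        (fun x : ℝ => (2 / Real.sqrt m) * ((x - m) ^ (-(1/2) : ℝ))) volume m 1 := by
      have := (hrp.comp_sub_right m).const_mul (2 / Real.sqrt m)
      simpa using this
    apply hshift.mono_fun
    · apply Measurable.aestronglyMeasurable
      apply Measurable.const_mul
      exact (measurable_id.mul (measurable_const.sub measurable_id)).div
        (Real.continuous_sqrt.measurable.comp (by measurability))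
    · rw [Filter.EventuallyLE, ae_restrict_iff' measurableSet_uIoc]
      apply Eventually.of_forall
      intro t ht
      rw [uIoc_of_le hm1.le] at ht
      obtain ⟨ht1, ht2⟩ := ht
      have htm : 0 < t - m := by linarith
      have hnum : 0 ≤ 2 * (t * (1 - t)) := by nlinarith
      have hnumle : 2 * (t * (1 - t)) ≤ 2 := by nlinarith
      have hsm : 0 < Real.sqrt m := Real.sqrt_pos.2 hm0
      have hstm : 0 < Real.sqrt (t - m) := Real.sqrt_pos.2 htm
      have hAle : Real.sqrt m * Real.sqrt (t - m) ≤ Real.sqrt (t ^ 2 - m ^ 2) := by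
        rw [← Real.sqrt_mul hm0.le]
        apply Real.sqrt_le_sqrt
        nlinarith
      have hApos : 0 < Real.sqrt (t ^ 2 - m ^ 2) := lt_of_lt_of_le (by positivity) hAle
      have hrw : (t - m) ^ (-(1/2) : ℝ) = 1 / Real.sqrt (t - m) := by
        rw [Real.rpow_neg htm.le, Real.sqrt_eq_rpow, one_div]
        norm_num
      have hL : 0 ≤ 2 * (t * (1 - t) / Real.sqrt (t ^ 2 - m ^ 2)) :=
        mul_nonneg (by norm_num) (div_nonneg (by nlinarith) (Real.sqrt_nonneg _))
      have hR : 0 ≤ 2 / Real.sqrt m * ((t - m) ^ (-(1/2) : ℝ)) := by positivity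
      simp only [Real.norm_eq_abs, abs_of_nonneg hL, abs_of_nonneg hR]
      rw [hrw]
      calc 2 * (t * (1 - t) / Real.sqrt (t ^ 2 - m ^ 2))
          = 2 * (t * (1 - t)) / Real.sqrt (t ^ 2 - m ^ 2) := by ring
        _ ≤ 2 / (Real.sqrt m * Real.sqrt (t - m)) :=
            div_le_div₀ (by norm_num) hnumle (by positivity) hAle
        _ = 2 / Real.sqrt m * (1 / Real.sqrt (t - m)) := by
            rw [mul_one_div, div_div]
    -- note the last `≤` is an equality; nlinarith closes it
  have hFTC := intervalIntegral.integral_eq_sub_of_hasDerivAt_of_le hm1.le hcont hderiv hint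
  have h2 : (∫ t in Ioo m 1, t * (1 - t) / Real.sqrt (t ^ 2 - m ^ 2))
      = ∫ t in m..1, t * (1 - t) / Real.sqrt (t ^ 2 - m ^ 2) := by
    rw [intervalIntegral.integral_of_le hm1.le, integral_Ioc_eq_integral_Ioo]
  rw [h2, ← intervalIntegral.integral_const_mul, hFTC]
  -- evaluate F 1 - F m
  have hmm : m ^ 2 - m ^ 2 = 0 := by ring
  have h1m : (1:ℝ) ^ 2 - m ^ 2 = 1 - m ^ 2 := by ring
  have hq : (0:ℝ) < 1 - m ^ 2 := by nlinarith
  have hsq : 0 ≤ Real.sqrt (1 - m ^ 2) := Real.sqrt_nonneg _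
  have hden : Real.sqrt (1 - m ^ 2) + 1 ≠ 0 := by positivity
  rw [Real.log_div hm0.ne' hden]
  simp only [hF, hmm, h1m, Real.sqrt_zero, mul_zero, add_zero, zero_sub, mul_neg]
  rw [add_comm (Real.sqrt (1 - m ^ 2)) 1]
  ring
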